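/- The number of S-Motzkin paths of length 3n equals (1/(2n+1)) * binomial(3n, n), the number of ternary trees with n nodes. -/

import Mathlib

/-- The three step types of a Motzkin path: H = (1,0), U = (1,1), D = (1,-1). -/
inductive Step : Type | H | U | D
deriving DecidableEq, Repr

/-- Between every two consecutive H steps there is exactly one U step. -/
def OneUBetweenH (w : List Step) : Prop :=
  ∀ p mid s : List Step, w = p ++ Step.H :: mid ++ Step.H :: s →
    Step.H ∉ mid → mid.count Step.U = 1

/-- The k-th D step occurs after at least k H steps and at least k U steps. -/
def DCond (w : List Step) : Prop :=
  ∀ p s : List Step, w = p ++ Step.D :: s →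
    p.count Step.D + 1 ≤ p.count Step.H ∧ p.count Step.D + 1 ≤ p.count Step.U

/-- A Motzkin path: every prefix has #U ≥ #D, and the total height is 0. -/
def IsMotzkin (w : List Step) : Prop :=
  w.count Step.U = w.count Step.D ∧
  ∀ p : List Step, p <+: w → p.count Step.D ≤ p.count Step.U

/-- An S-Motzkin path of length 3n (original definition): a Motzkin path with n steps
of each type, starting with H, with exactly one U between consecutive H steps,
and where the k-th D occurs after at least k H steps and k U steps. -/
def IsSMotzkin (n : ℕ) (w : List Step) : Prop :=
  IsMotzkin w ∧ w.count Step.H = n ∧ w.count Step.U = n ∧ w.count Step.D = n ∧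
  (w ≠ [] → w.head? = some Step.H) ∧ OneUBetweenH w ∧ DCond w

/-! ### encoding machinery -/

def ndq : Step → Bool := fun s => !(s == Step.D)
def isD : Step → Bool := fun s => s == Step.D

@[simp] lemma ndq_H : ndq Step.H = true := rfl
@[simp] lemma ndq_U : ndq Step.U = true := rfl
@[simp] lemma ndq_D : ndq Step.D = false := rfl
@[simp] lemma isD_H : isD Step.H = false := rfl
@[simp] lemma isD_U : isD Step.U = false := rfl
@[simp] lemma isD_D : isD Step.D = true := rfl

def altHU : ℕ → List Step
  | 0 => []
  | n+1 => Step.H :: Step.U :: altHU n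

@[simp] lemma altHU_count_H (n : ℕ) : (altHU n).count Step.H = n := by
  induction n with
  | zero => rfl
  | succ k ih => simp [altHU, List.count_cons, ih]

@[simp] lemma altHU_count_U (n : ℕ) : (altHU n).count Step.U = n := by
  induction n with
  | zero => rfl
  | succ k ih => simp [altHU, List.count_cons, ih]

@[simp] lemma altHU_length (n : ℕ) : (altHU n).length = 2 * n := by
  induction n with
  | zero => rfl
  | succ k ih => simp [altHU, ih]; ring

lemma altHU_ndq (n : ℕ) : ∀ x ∈ altHU n, ndq x = true := by
  induction n with
  | zero => simp [altHU]
  | succ k ih => simp [altHU]; exact ih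

/-- prefixes of the alternating word have balanced H/U counts -/
lemma prefix_altHU (n : ℕ) : ∀ p, p <+: altHU n →
    p.count Step.U ≤ p.count Step.H ∧ p.count Step.H ≤ p.count Step.U + 1 := by
  induction n with
  | zero => intro p hp; simp [altHU] at hp; simp [hp]
  | succ k ih =>
    intro p hp
    rw [altHU] at hp
    rcases List.prefix_cons_iff.mp hp with rfl | ⟨t, rfl, ht⟩
    · simp
    rcases List.prefix_cons_iff.mp ht with rfl | ⟨r, rfl, hr⟩
    · simp [List.count_cons]
    have := ih r hr
    simp [List.count_cons]
    omega

/-- counts of the three step types add to the length -/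
lemma count_total (w : List Step) :
    w.count Step.H + w.count Step.U + w.count Step.D = w.length := by
  induction w with
  | nil => rfl
  | cons x t ih => cases x <;> simp [List.count_cons] <;> omega

lemma count_H_filter (w : List Step) :
    (w.filter ndq).count Step.H = w.count Step.H :=
  List.count_filter (by simp)

lemma count_U_filter (w : List Step) :
    (w.filter ndq).count Step.U = w.count Step.U :=
  List.count_filter (by simp)

lemma count_U_eq_count_U_filter (w : List Step) :
    (w.filter ndq).count Step.U = w.count Step.U := count_U_filter w

/-- the characterization we use -/
def SChar (n : ℕ) (w : List Step) : Prop :=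
  w.filter ndq = altHU n ∧ w.count Step.D = n ∧
  ∀ p, p <+: w → 2 * p.count Step.D ≤ p.count Step.H + p.count Step.U

/-- first-occurrence split -/
lemma exists_first_split {α : Type*} [DecidableEq α] {a : α} :
    ∀ {l : List α}, a ∈ l → ∃ s t, l = s ++ a :: t ∧ a ∉ s := by
  intro l
  induction l with
  | nil => simp
  | cons b t ih =>
    intro h
    by_cases hab : a = b
    · exact ⟨[], t, by simp [hab], by simp⟩
    · have : a ∈ t := by rcases List.mem_cons.mp h with h' | h' <;> tauto
      obtain ⟨s', t', rfl, hs⟩ := ih this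
      exact ⟨b :: s', t', by simp, by simp [hs, hab]⟩

/-- structure lemma: a D-free word with n H's and n U's, starting with H,
with exactly one U between consecutive H's, is the alternating word. -/
lemma alt_of_struct : ∀ (n : ℕ) (f : List Step),
    (∀ x ∈ f, x ≠ Step.D) → f.count Step.H = n → f.count Step.U = n →
    (f ≠ [] → f.head? = some Step.H) →
    (∀ p mid s, f = p ++ Step.H :: mid ++ Step.H :: s → Step.H ∉ mid →
      mid.count Step.U = 1) →
    f = altHU n := by
  intro n
  induction n with
  | zero =>
    intro f hD hH hU _ _
    have hlen : f.length = 0 := by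
      have := count_total f
      have hd : f.count Step.D = 0 := by
        rw [List.count_eq_zero]
        intro h; exact hD _ h rfl
      omega
    simpa [altHU] using List.eq_nil_of_length_eq_zero hlen
  | succ k ih =>
    intro f hD hH hU hhead honeu
    have hne : f ≠ [] := by
      rintro rfl; simp at hH
    obtain ⟨x, g, rfl⟩ := List.exists_cons_of_ne_nil hne
    have hx : x = Step.H := by
      have := hhead hne; simp at this; exact this
    subst hx
    -- count H g = k
    have hHg : g.count Step.H = k := by
      simp [List.count_cons] at hH; omega
    have hUg : g.count Step.U = k + 1 := by
      simpa [List.count_cons] using hU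
    rcases Nat.eq_zero_or_pos k with rfl | hk
    · -- f = [H, U]
      have hgU : ∀ x ∈ g, x = Step.U := by
        intro x hxg
        cases x
        · exact absurd (List.count_pos_iff.mpr hxg) (by simp [hHg])
        · rfl
        · exact absurd rfl (hD _ (List.mem_cons_of_mem _ hxg))
      have : g.count Step.U = g.length := by
        rw [List.count_eq_length]; intro b hb; exact (hgU b hb).symm
      have hlg : g.length = 1 := by omega
      obtain ⟨y, g', rfl⟩ : ∃ y g', g = y :: g' := by
        cases g with
        | nil => simp at hlg
        | cons y g' => exact ⟨y, g', rfl⟩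
      have hg' : g' = [] := by simpa using hlg
      subst hg'
      have : y = Step.U := hgU y (by simp)
      subst this
      rfl
    · -- k ≥ 1 : there's another H
      have hHm : Step.H ∈ g := by
        rw [← List.count_pos_iff]; omega
      obtain ⟨m, t, rfl, hm⟩ := exists_first_split hHm
      have hmU : m.count Step.U = 1 := honeu [] m t (by simp) hm
      -- m consists of exactly one U
      have hmall : ∀ x ∈ m, x = Step.U := by
        intro x hxm
        cases x
        · exact absurd hxm hm
        · rfl
        · exact absurd rfl (hD _ (by simp [hxm]))
      have hmlen : m.length = 1 := by
        have : m.count Step.U = m.length := by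
          rw [List.count_eq_length]; intro b hb; exact (hmall b hb).symm
        omega
      obtain ⟨y, m', rfl⟩ : ∃ y m', m = y :: m' := by
        cases m with
        | nil => simp at hmlen
        | cons y m' => exact ⟨y, m', rfl⟩
      have hm' : m' = [] := by simpa using hmlen
      subst hm'
      have : y = Step.U := hmall y (by simp)
      subst this
      -- now f = H :: U :: H :: t ; recurse on H :: t
      have hrec : Step.H :: t = altHU k := by
        apply ih
        · intro x hx
          rcases List.mem_cons.mp hx with rfl | hx'
          · simp
          · exact hD x (by simp [hx'])
        · simp [List.count_cons] at hHg ⊢; omega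
        · simp [List.count_cons] at hUg ⊢; omega
        · intro _; rfl
        · intro p mid s heq hmid
          apply honeu (Step.H :: Step.U :: p) mid s _ hmid
          rw [show Step.H :: Step.U :: p ++ Step.H :: mid ++ Step.H :: s
              = Step.H :: Step.U :: (p ++ Step.H :: mid ++ Step.H :: s) by simp]
          rw [← heq]
          simp
      rw [altHU, ← hrec]
      simp

/-- `IsSMotzkin` implies the characterization -/
lemma schar_of_smotzkin {n : ℕ} {w : List Step} (h : IsSMotzkin n w) : SChar n w := by
  obtain ⟨hmotz, hH, hU, hD, hhead, honeu, hdc⟩ := h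
  have hfilter : w.filter ndq = altHU n := by
    apply alt_of_struct
    · intro x hx
      have := List.of_mem_filter hx
      cases x <;> simp_all
    · rw [count_H_filter]; exact hH
    · rw [count_U_filter]; exact hU
    · intro hne
      have hwne : w ≠ [] := by rintro rfl; simp at hne
      obtain ⟨y, w', rfl⟩ := List.exists_cons_of_ne_nil hwne
      have hy : y = Step.H := by have := hhead hwne; simpa using this
      subst hy
      simp [List.filter_cons]
    · intro p mid s heq hmid
      -- lift the decomposition through the filter
      have heq' : List.filter ndq w = (p ++ [Step.H]) ++ ((mid ++ [Step.H]) ++ s) := by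
        rw [heq]; simp
      rw [List.filter_eq_append_iff] at heq'
      obtain ⟨w1, w2, hw, hfw1, hfw2⟩ := heq'
      rw [List.filter_eq_append_iff] at hfw2
      obtain ⟨m12, s2, hw2, hfm12, hfs2⟩ := hfw2
      rw [List.filter_eq_append_iff] at hfm12
      obtain ⟨m1, m2, hm12, hfm1, hfm2⟩ := hfm12
      rw [List.filter_eq_cons_iff] at hfm2
      obtain ⟨m2a, m2b, hm2, hm2a, -, hfm2b⟩ := hfm2
      rw [List.filter_eq_append_iff] at hfw1
      obtain ⟨u1, u2, hu, hfu1, hfu2⟩ := hfw1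
      rw [List.filter_eq_cons_iff] at hfu2
      obtain ⟨u2a, u2b, hu2, hu2a, -, hfu2b⟩ := hfu2
      have hDonly : ∀ (l : List Step), List.filter ndq l = [] → l.count Step.U = 0 ∧ Step.H ∉ l := by
        intro l hl
        constructor
        · rw [List.count_eq_zero]
          intro hmem
          have : Step.U ∈ List.filter ndq l := List.mem_filter_of_mem hmem (by simp)
          rw [hl] at this; simp at this
        · intro hmem
          have : Step.H ∈ List.filter ndq l := List.mem_filter_of_mem hmem (by simp)
          rw [hl] at this; simp at this
      have hDa : ∀ (l : List Step), (∀ x ∈ l, ¬ ndq x = true) → l.count Step.U = 0 ∧ Step.H ∉ l := by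
        intro l hl
        constructor
        · rw [List.count_eq_zero]; intro hmem; exact absurd (by simp) (hl _ hmem)
        · intro hmem; exact absurd (by simp) (hl _ hmem)
      have key := honeu (u1 ++ u2a) (u2b ++ m1 ++ m2a) (m2b ++ s2) ?_ ?_
      · obtain ⟨h1, -⟩ := hDonly u2b hfu2b
        obtain ⟨h3, -⟩ := hDa m2a hm2a
        have h2 : m1.count Step.U = mid.count Step.U := by
          rw [← hfm1, count_U_filter]
        simp only [List.count_append] at key
        rw [h1, h2, h3] at key
        simpa using key
      · rw [hw, hw2, hm12, hm2, hu, hu2]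
        simp
      · intro hmem
        simp only [List.mem_append] at hmem
        rcases hmem with (h' | h') | h'
        · exact (hDonly u2b hfu2b).2 h'
        · have : Step.H ∈ List.filter ndq m1 := List.mem_filter_of_mem h' (by simp)
          rw [hfm1] at this
          exact hmid this
        · exact (hDa m2a hm2a).2 h'
  have hdw : w.count Step.D = n := hD
  refine ⟨hfilter, hdw, ?_⟩
  -- prefix condition by reverse induction on the prefix
  intro p
  induction p using List.reverseRecOn with
  | nil => intro _; simp
  | append_singleton q x ihq =>
    intro hp
    have hq : q <+: w := (List.prefix_append q [x]).trans hp
    have := ihq hq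
    cases x with
    | D =>
      obtain ⟨s, hs⟩ := hp
      have hdd := hdc q s (by rw [← hs]; simp)
      simp only [List.count_append, List.count_cons, List.count_nil]
      simp
      omega
    | H =>
      simp only [List.count_append, List.count_cons, List.count_nil]
      simp
      omega
    | U =>
      simp only [List.count_append, List.count_cons, List.count_nil]
      simp
      omega

/-- in the alternating word, between two consecutive H's there is exactly one U -/
lemma altHU_between : ∀ (n : ℕ) (P Mid S : List Step),
    altHU n = P ++ Step.H :: Mid ++ Step.H :: S → Step.H ∉ Mid →
    Mid.count Step.U = 1 := by
  intro n
  induction n with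
  | zero =>
    intro P Mid S h _
    rw [altHU] at h
    exact absurd h.symm (by simp)
  | succ k ih =>
    intro P Mid S h hmid
    rw [altHU] at h
    rcases P with - | ⟨x, P1⟩
    · simp only [List.nil_append, List.cons.injEq, true_and] at h
      revert h
      rcases Mid with - | ⟨m0, Mid'⟩ <;> intro h
      · simp at h
      simp only [List.cons_append, List.cons.injEq] at h
      obtain ⟨-, rfl, h⟩ := h
      revert h hmid
      rcases Mid' with - | ⟨m1, Mid''⟩ <;> intro h hmid
      · simp
      exfalso
      cases k with
      | zero => rw [altHU] at h; simp at h
      | succ j =>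
        rw [altHU] at h
        simp only [List.cons_append, List.cons.injEq] at h
        obtain ⟨rfl, -⟩ := h
        exact hmid (by simp)
    rcases P1 with - | ⟨y, P'⟩
    · simp only [List.cons_append, List.nil_append, List.cons.injEq] at h
      obtain ⟨rfl, h, -⟩ := h
      simp at h
    · simp only [List.cons_append, List.cons.injEq] at h
      obtain ⟨rfl, rfl, h⟩ := h
      exact ih P' Mid S h hmid

/-- the characterization implies `IsSMotzkin` -/
lemma smotzkin_of_schar {n : ℕ} {w : List Step} (h : SChar n w) : IsSMotzkin n w := by
  obtain ⟨hfilter, hD, hpre⟩ := h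
  have hH : w.count Step.H = n := by
    rw [← count_H_filter, hfilter]; simp
  have hU : w.count Step.U = n := by
    rw [← count_U_filter, hfilter]; simp
  have hbal : ∀ p : List Step, p <+: w →
      p.count Step.U ≤ p.count Step.H ∧ p.count Step.H ≤ p.count Step.U + 1 := by
    intro p hp
    have := prefix_altHU n (p.filter ndq) (by rw [← hfilter]; exact hp.filter ndq)
    rwa [count_H_filter, count_U_filter] at this
  refine ⟨⟨by omega, ?_⟩, hH, hU, hD, ?_, ?_, ?_⟩
  · -- prefix D ≤ U
    intro p hp
    have h1 := hpre p hp
    have h2 := hbal p hp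
    omega
  · -- head
    intro hne
    obtain ⟨x, w', rfl⟩ := List.exists_cons_of_ne_nil hne
    have hxH : x = Step.H := by
      cases x
      · rfl
      · -- U : filter starts with U but altHU starts with H or is empty
        exfalso
        have : Step.U :: List.filter ndq w' = altHU n := by
          simpa [List.filter_cons] using hfilter
        cases n with
        | zero => rw [altHU] at this; simp at this
        | succ k => rw [altHU] at this; simp at this
      · -- D : prefix [D] violates the prefix condition
        exfalso
        have := hpre [Step.D] ⟨w', rfl⟩
        simp at this
    rw [hxH]; rfl
  · -- OneUBetweenH
    intro p mid s heq hmid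
    have hf : altHU n = (p.filter ndq) ++ Step.H :: (mid.filter ndq) ++ Step.H :: (s.filter ndq) := by
      rw [← hfilter, heq]
      simp [List.filter_append, List.filter_cons]
    have hmid' : Step.H ∉ mid.filter ndq := by
      intro hmem
      exact hmid (List.mem_of_mem_filter hmem)
    have := altHU_between n _ _ _ hf hmid'
    rwa [count_U_filter] at this
  · -- DCond
    intro p s heq
    have hp : p ++ [Step.D] <+: w := by
      rw [heq]
      refine ⟨s, by simp⟩
    have h1 := hpre _ hp
    have h2 := hbal p (by exact (List.prefix_append p [Step.D]).trans hp)
    simp only [List.count_append, List.count_cons, List.count_nil] at h1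
    simp at h1
    omega

/-! ### encoding to boolean words -/

def enc (w : List Step) : List Bool := w.map isD

@[simp] lemma enc_count_true (w : List Step) : (enc w).count true = w.count Step.D := by
  induction w with
  | nil => rfl
  | cons x t ih => cases x <;> simp [enc, List.count_cons, ih] at * <;> omega

@[simp] lemma enc_count_false (w : List Step) :
    (enc w).count false = w.count Step.H + w.count Step.U := by
  induction w with
  | nil => rfl
  | cons x t ih => cases x <;> simp [enc, List.count_cons, ih] at * <;> omega

lemma enc_inj : ∀ w1 w2 : List Step, enc w1 = enc w2 →
    w1.filter ndq = w2.filter ndq → w1 = w2 := by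
  intro w1
  induction w1 with
  | nil =>
    intro w2 h _
    cases w2 with
    | nil => rfl
    | cons y t2 => simp [enc] at h
  | cons x t1 ih =>
    intro w2 h hf
    cases w2 with
    | nil => simp [enc] at h
    | cons y t2 =>
      simp only [enc, List.map_cons, List.cons.injEq] at h
      obtain ⟨hxy, ht⟩ := h
      have hxy' : x = y := by
        cases x <;> cases y <;> simp_all [List.filter_cons]
      subst hxy'
      have hf' : t1.filter ndq = t2.filter ndq := by
        cases x <;> simpa [List.filter_cons] using hf
      rw [ih t2 ht hf']

/-! ### decoding -/

def dec : List Step → List Bool → List Step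
  | _, [] => []
  | st, true :: l => Step.D :: dec st l
  | [], false :: _ => []
  | a :: st, false :: l => a :: dec st l

lemma dec_enc : ∀ (l : List Bool) (st : List Step), (∀ x ∈ st, ndq x = true) →
    l.count false ≤ st.length → enc (dec st l) = l := by
  intro l
  induction l with
  | nil => intro st _ _; rw [dec]; rfl
  | cons c l ih =>
    intro st hst hlen
    cases c
    · obtain ⟨a, st', rfl⟩ : ∃ a st', st = a :: st' := by
        cases st with
        | nil => simp [List.count_cons] at hlen
        | cons a st' => exact ⟨a, st', rfl⟩
      rw [dec]
      have ha : isD a = false := by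
        have := hst a (by simp)
        cases a <;> simp_all
      simp only [enc, List.map_cons, ha]
      rw [show (List.map isD (dec st' l)) = enc (dec st' l) from rfl,
        ih st' (fun x hx => hst x (by simp [hx])) (by simp [List.count_cons] at hlen ⊢; omega)]
    · rw [dec]
      simp only [enc, List.map_cons, isD_D]
      rw [show (List.map isD (dec st l)) = enc (dec st l) from rfl,
        ih st hst (by simp [List.count_cons] at hlen ⊢; omega)]

lemma dec_filter : ∀ (l : List Bool) (st : List Step), (∀ x ∈ st, ndq x = true) →
    l.count false ≤ st.length → (dec st l).filter ndq = st.take (l.count false) := by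
  intro l
  induction l with
  | nil => intro st _ _; rw [dec]; simp
  | cons c l ih =>
    intro st hst hlen
    cases c
    · obtain ⟨a, st', rfl⟩ : ∃ a st', st = a :: st' := by
        cases st with
        | nil => simp [List.count_cons] at hlen
        | cons a st' => exact ⟨a, st', rfl⟩
      rw [dec]
      have ha : ndq a = true := hst a (by simp)
      simp only [List.filter_cons, ha, if_pos]
      rw [ih st' (fun x hx => hst x (by simp [hx])) (by simp [List.count_cons] at hlen ⊢; omega)]
      simp [List.count_cons]
    · rw [dec]
      simp only [List.filter_cons, ndq_D]
      rw [ih st hst (by simp [List.count_cons] at hlen ⊢; omega)]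
      simp [List.count_cons]


def pcount : ℕ → ℕ → ℕ
  | 0, 0 => 1
  | 0, _+1 => 0
  | x+1, 0 => pcount x 0
  | x+1, y+1 => pcount x (y+1) + if 2*(y+1) ≤ x+1 then pcount (x+1) y else 0
termination_by x y => (x, y)

lemma pcount_zero : ∀ x, pcount x 0 = 1
  | 0 => by rw [pcount]
  | x+1 => by rw [pcount]; exact pcount_zero x

lemma pcount_eq_zero : ∀ x y, x < 2*y → pcount x y = 0
  | 0, y+1, _ => by rw [pcount]
  | x+1, y+1, h => by
    rw [pcount, if_neg (by omega), pcount_eq_zero x (y+1) (by omega)]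
  | x+1, 0, h => by omega
termination_by x y => (x, y)

lemma pcount_closed : ∀ x y, (x+1) * pcount x y = (x + 1 - 2*y) * (x+y).choose y
  | 0, 0 => by rw [pcount]; simp
  | 0, y+1 => by rw [pcount]; simp; omega
  | x+1, 0 => by simp [pcount_zero]
  | x+1, y+1 => by
    have IH1 := pcount_closed x (y+1)
    have IH2 := pcount_closed (x+1) y
    rw [pcount]
    by_cases hg : 2*(y+1) ≤ x+1
    · rw [if_pos hg]
      obtain ⟨c, hc⟩ : ∃ c, x = 2*y+1+c := ⟨x - (2*y+1), by omega⟩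
      subst hc
      -- abbreviations
      set m := 2*y+1+c with hm
      have hX : (m + (y+1)).choose (y+1) * (y+1) = (m + (y+1)).choose y * (m + 1) := by
        have := Nat.choose_succ_right_eq (m + (y+1)) y
        rw [this]; congr 1; omega
      have hsub1 : m + 1 - 2*(y+1) = c := by omega
      have hsub2 : m + 1 + 1 - 2*y = c + 3 := by omega
      have hsub3 : m + 1 + 1 - 2*(y+1) = c + 1 := by omega
      rw [hsub1] at IH1
      rw [hsub2] at IH2
      rw [hsub3]
      have hpas : (m + 1 + (y+1)).choose (y+1)
          = (m + (y+1)).choose (y+1) + (m + (y+1)).choose y := by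
        have : m + 1 + (y+1) = (m + (y+1)) + 1 := by omega
        rw [this, Nat.choose_succ_succ']; ring
      have hy : m + 1 + y = m + (y+1) := by omega
      rw [hpas, hy] at *
      -- cancel (m+1)
      apply Nat.eq_of_mul_eq_mul_left (show 0 < m+1 by omega)
      ring_nf
      ring_nf at IH1 IH2 hX
      nlinarith [IH1, IH2, hX]
    · rw [if_neg hg, pcount_eq_zero x (y+1) (by omega)]
      have : x + 1 + 1 - 2*(y+1) = 0 := by omega
      simp [this]
termination_by x y => (x, y)

/-- Finset of boolean words (true = D-step) with `x` falses, `y` trues,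
    and every prefix having 2 * (#true) ≤ #false. -/
def bpaths : ℕ → ℕ → Finset (List Bool)
  | 0, 0 => {([] : List Bool)}
  | 0, _+1 => ∅
  | x+1, 0 => (bpaths x 0).image (· ++ [false])
  | x+1, y+1 => (bpaths x (y+1)).image (· ++ [false]) ∪
      (if 2*(y+1) ≤ x+1 then (bpaths (x+1) y).image (· ++ [true]) else ∅)
termination_by x y => (x, y)

lemma bpaths_card : ∀ x y, (bpaths x y).card = pcount x y
  | 0, 0 => by rw [bpaths, pcount]; rfl
  | 0, y+1 => by rw [bpaths, pcount]; rfl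
  | x+1, 0 => by
    rw [bpaths, pcount, Finset.card_image_of_injective _ (by intro a b h; simpa using h)]
    exact bpaths_card x 0
  | x+1, y+1 => by
    have h1 := bpaths_card x (y+1)
    have h2 := bpaths_card (x+1) y
    rw [bpaths, pcount]
    rw [Finset.card_union_of_disjoint, Finset.card_image_of_injective _
      (by intro a b h; simpa using h)]
    · congr 1
      split
      · rw [Finset.card_image_of_injective _ (by intro a b h; simpa using h)]; exact h2
      · simp
    · rw [Finset.disjoint_left]
      intro l hl hr
      simp only [Finset.mem_image] at hl
      obtain ⟨a, -, ha⟩ := hl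
      rcases em (2*(y+1) ≤ x+1) with hc | hc
      · rw [if_pos hc] at hr
        simp only [Finset.mem_image] at hr
        obtain ⟨b, -, hb⟩ := hr
        rw [← hb] at ha
        have := congrArg List.getLast? ha
        simp at this
      · rw [if_neg hc] at hr; simp at hr
termination_by x y => (x, y)

lemma mem_bpaths : ∀ x y (l : List Bool), l ∈ bpaths x y ↔
    l.count false = x ∧ l.count true = y ∧
      ∀ p, p <+: l → 2 * p.count true ≤ p.count false
  | 0, 0, l => by
    rw [bpaths]
    simp only [Finset.mem_singleton]
    constructor
    · rintro rfl; simp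
    · rintro ⟨h1, h2, -⟩
      have : l.length = _ := List.length_eq_countP_add_countP (· == true)
      rcases l with _ | ⟨a, t⟩
      · rfl
      · exfalso; cases a <;> simp_all
  | 0, y+1, l => by
    rw [bpaths]
    simp only [Finset.notMem_empty, false_iff, not_and]
    intro h1 h2 h3
    have := h3 l (List.prefix_refl l)
    omega
  | x+1, 0, l => by
    have IH := mem_bpaths x 0
    rw [bpaths]
    simp only [Finset.mem_image]
    constructor
    · rintro ⟨a, ha, rfl⟩
      rw [IH] at ha
      obtain ⟨h1, h2, h3⟩ := ha
      refine ⟨by simp [h1], by simp [h2], ?_⟩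
      intro p hp
      rcases List.prefix_concat_iff.mp hp with rfl | hp'
      · first | (simp [h1, h2]; omega) | simp [h1, h2]
      · exact h3 p hp'
    · rintro ⟨h1, h2, h3⟩
      have hne : l ≠ [] := by rintro rfl; simp at h1
      obtain rfl | ⟨a, c, hl⟩ := List.eq_nil_or_concat l
      · exact absurd rfl hne
      rw [List.concat_eq_append] at hl
      subst hl
      have hc : c = false := by
        by_contra hc
        have : c = true := by cases c <;> simp_all
        subst this; simp at h2
      subst hc
      refine ⟨a, ?_, rfl⟩
      rw [IH]
      simp at h1 h2
      exact ⟨h1, h2, fun p hp => h3 p (hp.trans (by simp))⟩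
  | x+1, y+1, l => by
    have IH1 := mem_bpaths x (y+1)
    have IH2 := mem_bpaths (x+1) y
    rw [bpaths]
    simp only [Finset.mem_union, Finset.mem_image]
    constructor
    · rintro (⟨a, ha, rfl⟩ | h)
      · rw [IH1] at ha
        obtain ⟨h1, h2, h3⟩ := ha
        refine ⟨by simp [h1], by simp [h2], ?_⟩
        intro p hp
        rcases List.prefix_concat_iff.mp hp with rfl | hp'
        · have := h3 a (List.prefix_refl a); simp [h1, h2]; omega
        · exact h3 p hp'
      · rcases em (2*(y+1) ≤ x+1) with hc | hc
        · rw [if_pos hc] at h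
          simp only [Finset.mem_image] at h
          obtain ⟨a, ha, rfl⟩ := h
          rw [IH2] at ha
          obtain ⟨h1, h2, h3⟩ := ha
          refine ⟨by simp [h1], by simp [h2], ?_⟩
          intro p hp
          rcases List.prefix_concat_iff.mp hp with rfl | hp'
          · first | (simp [h1, h2]; omega) | simp [h1, h2]
          · exact h3 p hp'
        · rw [if_neg hc] at h; simp at h
    · rintro ⟨h1, h2, h3⟩
      have hne : l ≠ [] := by rintro rfl; simp at h1
      obtain rfl | ⟨a, c, hl⟩ := List.eq_nil_or_concat l
      · exact absurd rfl hne
      rw [List.concat_eq_append] at hl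
      subst hl
      cases c
      · left
        refine ⟨a, ?_, rfl⟩
        rw [IH1]
        simp at h1 h2
        exact ⟨h1, h2, fun p hp => h3 p (hp.trans (by simp))⟩
      · right
        simp at h1 h2
        have hg : 2*(y+1) ≤ x+1 := by
          have := h3 (a ++ [true]) (List.prefix_refl _)
          simp at this
          omega
        rw [if_pos hg]
        simp only [Finset.mem_image]
        refine ⟨a, ?_, rfl⟩
        rw [IH2]
        exact ⟨h1, h2, fun p hp => h3 p (hp.trans (by simp))⟩
termination_by x y => (x, y)


theorem smotzkin_count (n : ℕ) :
    Nat.card {w : List Step // IsSMotzkin n w} = (3 * n).choose n / (2 * n + 1) := by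
  have hiff : ∀ w, IsSMotzkin n w ↔ SChar n w :=
    fun w => ⟨schar_of_smotzkin, smotzkin_of_schar⟩
  have hmem : ∀ w : List Step, SChar n w → enc w ∈ bpaths (2*n) n := by
    intro w hw
    rw [mem_bpaths]
    obtain ⟨hf, hd, hp⟩ := hw
    have hH : w.count Step.H = n := by rw [← count_H_filter, hf]; simp
    have hU : w.count Step.U = n := by rw [← count_U_filter, hf]; simp
    refine ⟨by simp [hH, hU]; ring, by simp [hd], ?_⟩
    intro p hp'
    obtain ⟨t, ht⟩ := hp'
    have hpt : p = enc (w.take p.length) := by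
      have hmt : enc (w.take p.length) = (enc w).take p.length := by
        simpa [enc] using List.map_take isD w p.length
      rw [hmt, ← ht]
      simp
    rw [hpt]
    have hq := hp (w.take p.length) (List.take_prefix _ _)
    simpa using hq
  let F : {w : List Step // IsSMotzkin n w} → {l : List Bool // l ∈ bpaths (2*n) n} :=
    fun x => ⟨enc x.1, hmem x.1 ((hiff x.1).mp x.2)⟩
  have hbij : Function.Bijective F := by
    constructor
    · rintro ⟨w1, h1⟩ ⟨w2, h2⟩ h
      simp only [F, Subtype.mk.injEq] at h ⊢
      exact enc_inj w1 w2 h (by rw [((hiff w1).mp h1).1, ((hiff w2).mp h2).1])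
    · rintro ⟨l, hl⟩
      rw [mem_bpaths] at hl
      obtain ⟨h1, h2, h3⟩ := hl
      have hstep : ∀ x ∈ altHU n, ndq x = true := altHU_ndq n
      have hlen : l.count false ≤ (altHU n).length := by simp [h1, altHU_length]
      have henc := dec_enc l (altHU n) hstep hlen
      have hfil := dec_filter l (altHU n) hstep hlen
      rw [h1] at hfil
      have hfil' : (dec (altHU n) l).filter ndq = altHU n := by
        rw [hfil]
        exact List.take_of_length_le (by simp [altHU_length])
      have hchar : SChar n (dec (altHU n) l) := by
        refine ⟨hfil', ?_, ?_⟩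
        · have := enc_count_true (dec (altHU n) l)
          rw [henc] at this
          omega
        · intro p hp'
          have hmap := hp'.map isD
          rw [show List.map isD (dec (altHU n) l) = enc (dec (altHU n) l) from rfl,
            henc] at hmap
          have := h3 _ hmap
          rw [show List.map isD p = enc p from rfl] at this
          simpa using this
      exact ⟨⟨dec (altHU n) l, (hiff _).mpr hchar⟩, Subtype.ext henc⟩
  rw [Nat.card_eq_of_bijective F hbij, Nat.card_eq_finsetCard, bpaths_card]
  have hc := pcount_closed (2*n) n
  have h1 : 2*n+1-2*n = 1 := by omega
  rw [h1, one_mul] at hc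
  have h3n : 2*n+n = 3*n := by ring
  rw [h3n] at hc
  exact (Nat.div_eq_of_eq_mul_left (by omega) (by rw [← hc]; ring)).symm
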